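/- Fix λ, μ, T > 0, α ∈ (0,T), and set a = 1 − μ/λ. For each r₂ > max(a,1) let r₁ = a − r₂ and define y_{r₂}(t) = ( r₂(1−r₁) + r₁(r₂−1) φ(t) ) / ( 1 − r₁ + (r₂−1) φ(t) ) where φ(t) = e^{(t−T)λ(r₂−r₁)}. Then sup_{t ∈ [0, T−α]} | y_{r₂}(t) − r₂ | tends to 0 as r₂ → ∞. -/

import Mathlib

/-- Uniform convergence `y_{r₂}(t) → r₂` on `[0, T−α]` as `r₂ → ∞`. -/
theorem stmt_9 (lam mu T α : ℝ) (hlam : 0 < lam) (hmu : 0 < mu) (hT : 0 < T)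
    (hα0 : 0 < α) (hαT : α < T)
    (a : ℝ) (ha : a = 1 - mu / lam)
    (y : ℝ → ℝ → ℝ)
    (hy : ∀ r₂ t, y r₂ t =
      (r₂ * (1 - (a - r₂)) +
        (a - r₂) * (r₂ - 1) * Real.exp ((t - T) * lam * (r₂ - (a - r₂)))) /
      (1 - (a - r₂) + (r₂ - 1) * Real.exp ((t - T) * lam * (r₂ - (a - r₂))))) :
    ∀ ε > 0, ∃ R : ℝ, ∀ r₂ : ℝ, max a 1 < r₂ → R ≤ r₂ →
      ∀ t ∈ Set.Icc (0 : ℝ) (T - α), |y r₂ t - r₂| < ε := by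
  intro ε hε
  have hc : 0 < α * lam := mul_pos hα0 hlam
  -- x^2 * exp(-x) → 0
  have h0 := Real.tendsto_pow_mul_exp_neg_atTop_nhds_zero 2
  have h1 := Metric.tendsto_atTop.mp h0 (ε * (α * lam) ^ 2) (by positivity)
  obtain ⟨N, hN⟩ := h1
  refine ⟨(N / (α * lam) + a) / 2 + 1, fun r₂ hr₂max hR t ht => ?_⟩
  have hra : a < r₂ := lt_of_le_of_lt (le_max_left a 1) hr₂max
  have hr1 : 1 < r₂ := lt_of_le_of_lt (le_max_right a 1) hr₂max
  set s : ℝ := 2 * r₂ - a with hs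
  have hs_pos : 0 < s := by nlinarith
  have hsN : N ≤ α * lam * s := by
    have : N / (α * lam) ≤ s := by nlinarith
    calc N = α * lam * (N / (α * lam)) := by field_simp
    _ ≤ α * lam * s := by nlinarith
  obtain ⟨ht0, htT⟩ := ht
  set φ : ℝ := Real.exp ((t - T) * lam * (r₂ - (a - r₂))) with hφ
  have hφpos : 0 < φ := Real.exp_pos _
  have harg : r₂ - (a - r₂) = s := by ring
  have hφle : φ ≤ Real.exp (-(α * lam * s)) := by
    rw [hφ, harg]
    apply Real.exp_le_exp.mpr
    have h1 : t - T ≤ -α := by linarith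
    nlinarith [mul_pos hlam hs_pos]
  set D : ℝ := 1 - (a - r₂) + (r₂ - 1) * φ with hD
  have hD1 : 1 ≤ D := by nlinarith
  have hDpos : 0 < D := by linarith
  have key : y r₂ t - r₂ = (a - 2 * r₂) * (r₂ - 1) * φ / D := by
    rw [hy]
    rw [hD, hφ]
    have hne := hDpos.ne'
    rw [hD, hφ] at hne
    field_simp
    ring
  rw [key, abs_div, abs_of_pos hDpos]
  have hnum : |(a - 2 * r₂) * (r₂ - 1) * φ| = s * (r₂ - 1) * φ := by
    rw [abs_mul, abs_mul, abs_of_pos hφpos, abs_of_pos (by linarith : (0:ℝ) < r₂ - 1),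
      abs_of_neg (by linarith : a - 2 * r₂ < 0)]
    ring
  rw [hnum]
  have hNs := hN (α * lam * s) hsN
  rw [Real.dist_eq, sub_zero] at hNs
  have hexp_pos : 0 < Real.exp (-(α * lam * s)) := Real.exp_pos _
  have habs : |(α * lam * s) ^ 2 * Real.exp (-(α * lam * s))| =
      (α * lam * s) ^ 2 * Real.exp (-(α * lam * s)) := abs_of_nonneg (by positivity)
  rw [habs] at hNs
  -- s * (r₂ - 1) * φ / D ≤ s * s * exp(-(αλ)s) ≤ (αλ s)² exp / (αλ)² < ε
  have step1 : s * (r₂ - 1) * φ / D ≤ s * (r₂ - 1) * φ := by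
    apply div_le_self (mul_nonneg (mul_nonneg hs_pos.le (by linarith)) hφpos.le) hD1
  have step2 : s * (r₂ - 1) * φ ≤ s * s * Real.exp (-(α * lam * s)) := by
    have hr2s : r₂ - 1 ≤ s := by linarith
    have h1 : s * (r₂ - 1) * φ ≤ s * s * φ :=
      mul_le_mul_of_nonneg_right (mul_le_mul_of_nonneg_left hr2s hs_pos.le) hφpos.le
    have h2 : s * s * φ ≤ s * s * Real.exp (-(α * lam * s)) :=
      mul_le_mul_of_nonneg_left hφle (mul_nonneg hs_pos.le hs_pos.le)
    linarith
  have step3 : s * s * Real.exp (-(α * lam * s)) =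
      (α * lam * s) ^ 2 * Real.exp (-(α * lam * s)) / (α * lam) ^ 2 := by
    field_simp
  have step4 : (α * lam * s) ^ 2 * Real.exp (-(α * lam * s)) / (α * lam) ^ 2 < ε := by
    rw [div_lt_iff₀ (by positivity)]
    linarith
  calc s * (r₂ - 1) * φ / D ≤ s * (r₂ - 1) * φ := step1
    _ ≤ s * s * Real.exp (-(α * lam * s)) := step2
    _ = (α * lam * s) ^ 2 * Real.exp (-(α * lam * s)) / (α * lam) ^ 2 := step3
    _ < ε := step4
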